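/- Consider N clients with local objectives F_1, …, F_N : E → ℝ on a real finite-dimensional inner product space E, each differentiable and μ-strongly convex (μ > 0) with global minimizer v_k*, client weights p_1, …, p_N ≥ 0 with ∑_k p_k = 1, local iterates v¹, …, v^N ∈ E satisfying ‖∇F_k(v^k)‖ ≤ G for each k, the weighted average v̄ = ∑_k p_k v^k, and, for a nonempty subset S ⊆ {1,…,N}, the subset average z̄ = (1/|S|)∑_{k∈S} v^k. Let (Ω, 𝔽, P) be a probability space and W : Ω → E a square-integrable random vector with Bochner mean E[W] = z̄ and E[‖W − z̄‖²] ≤ J for some J ≥ 0. Then E[‖W − v̄‖²] ≤ J + 4 (∑_{k=1}^N (G/μ + ‖v_k*‖))². -/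

import Mathlib

open MeasureTheory
open scoped RealInnerProductSpace

/-- explicit bound `ξ = J + 4(∑ₖ (G/μ + ‖vₖ*‖))²` on `E‖W − v̄‖²`, where
`W` is an unbiased estimator of the filtered-subset average `z̄` with variance at most `J`
and `v̄` is the weighted average of the local iterates. -/
theorem filfl_aggregated_model_deviation_bound
    {E : Type*} [NormedAddCommGroup E] [InnerProductSpace ℝ E] [FiniteDimensional ℝ E]
    (N : ℕ) (μ : ℝ) (hμ : 0 < μ) (G : ℝ)
    (F : Fin N → E → ℝ) (F' : Fin N → E → E)
    (hdiff : ∀ k x, HasGradientAt (F k) (F' k x) x)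
    (hsc : ∀ k, ∀ v z : E, F k v + ⟪F' k v, z - v⟫ + μ / 2 * ‖z - v‖ ^ 2 ≤ F k z)
    (vstar : Fin N → E) (hmin : ∀ k x, F k (vstar k) ≤ F k x)
    (p : Fin N → ℝ) (hp : ∀ k, 0 ≤ p k) (hpsum : ∑ k, p k = 1)
    (v : Fin N → E) (hG : ∀ k, ‖F' k (v k)‖ ≤ G)
    (vbar : E) (hvbar : vbar = ∑ k, p k • v k)
    (S : Finset (Fin N)) (hS : S.Nonempty)
    (zbar : E) (hzbar : zbar = (S.card : ℝ)⁻¹ • ∑ k ∈ S, v k)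
    {Ω : Type*} [MeasurableSpace Ω] (P : Measure Ω) [IsProbabilityMeasure P]
    (W : Ω → E) (hW : MemLp W 2 P)
    (hmean : ∫ ω, W ω ∂P = zbar)
    (J : ℝ) (hJ : 0 ≤ J) (hvarJ : (∫ ω, ‖W ω - zbar‖ ^ 2 ∂P) ≤ J) :
    (∫ ω, ‖W ω - vbar‖ ^ 2 ∂P) ≤ J + 4 * (∑ k, (G / μ + ‖vstar k‖)) ^ 2 := by
  -- nonnegativity of G
  obtain ⟨k₀, hk₀⟩ := hS
  have hG0 : (0 : ℝ) ≤ G := le_trans (norm_nonneg _) (hG k₀)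
  -- gradient at the minimizer is zero
  have hgrad0 : ∀ k, F' k (vstar k) = 0 := by
    intro k
    have hloc : IsLocalMin (F k) (vstar k) :=
      Filter.Eventually.of_forall (fun x => hmin k x)
    have h0 : (InnerProductSpace.toDual ℝ E) (F' k (vstar k)) = 0 :=
      hloc.hasFDerivAt_eq_zero ((hdiff k (vstar k)).hasFDerivAt)
    exact (InnerProductSpace.toDual ℝ E).injective (by rw [h0, map_zero])
  -- key bound on each iterate
  have hvk : ∀ k, ‖v k‖ ≤ G / μ + ‖vstar k‖ := by
    intro k
    have h1 := hsc k (vstar k) (v k)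
    rw [hgrad0 k, inner_zero_left] at h1
    have h2 := hsc k (v k) (vstar k)
    have h3 := hmin k (v k)
    -- μ ‖v k - vstar k‖² ≤ ⟪F' k (v k), v k - vstar k⟫
    have hnormsym : ‖vstar k - v k‖ = ‖v k - vstar k‖ := norm_sub_rev _ _
    have hkey : μ * ‖v k - vstar k‖ ^ 2 ≤ ⟪F' k (v k), v k - vstar k⟫ := by
      have := add_le_add h1 h2
      rw [hnormsym] at this
      have h4 : ⟪F' k (v k), vstar k - v k⟫ = -⟪F' k (v k), v k - vstar k⟫ := by
        rw [← inner_neg_right, neg_sub]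
      nlinarith [this, h3]
    have hCS : ⟪F' k (v k), v k - vstar k⟫ ≤ G * ‖v k - vstar k‖ := by
      calc ⟪F' k (v k), v k - vstar k⟫ ≤ ‖F' k (v k)‖ * ‖v k - vstar k‖ :=
            real_inner_le_norm _ _
        _ ≤ G * ‖v k - vstar k‖ := by
            exact mul_le_mul_of_nonneg_right (hG k) (norm_nonneg _)
    have hdist : ‖v k - vstar k‖ ≤ G / μ := by
      rcases eq_or_lt_of_le (norm_nonneg (v k - vstar k)) with h | h
      · rw [← h]; positivity
      · have h5 : μ * ‖v k - vstar k‖ ^ 2 ≤ G * ‖v k - vstar k‖ := le_trans hkey hCS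
        rw [le_div_iff₀ hμ]
        nlinarith
    calc ‖v k‖ ≤ ‖v k - vstar k‖ + ‖vstar k‖ := by
          have := norm_add_le (v k - vstar k) (vstar k)
          simpa using this
      _ ≤ G / μ + ‖vstar k‖ := add_le_add hdist le_rfl
  set C : ℝ := ∑ k, (G / μ + ‖vstar k‖) with hC
  have hck : ∀ k : Fin N, (0:ℝ) ≤ G / μ + ‖vstar k‖ := by
    intro k; positivity
  -- bound on ‖vbar‖
  have hvbarn : ‖vbar‖ ≤ C := by
    rw [hvbar]
    calc ‖∑ k, p k • v k‖ ≤ ∑ k, ‖p k • v k‖ := norm_sum_le _ _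
      _ ≤ ∑ k, (G / μ + ‖vstar k‖) := by
          apply Finset.sum_le_sum
          intro k _
          rw [norm_smul, Real.norm_eq_abs, abs_of_nonneg (hp k)]
          have hpk1 : p k ≤ 1 := by
            rw [← hpsum]
            exact Finset.single_le_sum (fun j _ => hp j) (Finset.mem_univ k)
          calc p k * ‖v k‖ ≤ 1 * (G / μ + ‖vstar k‖) :=
                mul_le_mul hpk1 (hvk k) (norm_nonneg _) zero_le_one
            _ = G / μ + ‖vstar k‖ := one_mul _
  have hzbarn : ‖zbar‖ ≤ C := by
    rw [hzbar]
    have hcard : (0:ℝ) < (S.card : ℝ) := by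
      exact_mod_cast Finset.card_pos.mpr ⟨k₀, hk₀⟩
    rw [norm_smul, Real.norm_eq_abs, abs_of_nonneg (by positivity : (0:ℝ) ≤ (S.card : ℝ)⁻¹)]
    have h1 : ‖∑ k ∈ S, v k‖ ≤ ∑ k ∈ S, (G / μ + ‖vstar k‖) := by
      calc ‖∑ k ∈ S, v k‖ ≤ ∑ k ∈ S, ‖v k‖ := norm_sum_le _ _
        _ ≤ _ := Finset.sum_le_sum (fun k _ => hvk k)
    have h2 : ∑ k ∈ S, (G / μ + ‖vstar k‖) ≤ C := by
      exact Finset.sum_le_sum_of_subset_of_nonneg (Finset.subset_univ S)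
        (fun k _ _ => hck k)
    have hinv : (S.card : ℝ)⁻¹ ≤ 1 := by
      rw [inv_le_one_iff₀]
      right
      exact_mod_cast Nat.one_le_iff_ne_zero.mpr (Finset.card_ne_zero_of_mem hk₀)
    calc (S.card : ℝ)⁻¹ * ‖∑ k ∈ S, v k‖ ≤ 1 * C := by
          apply mul_le_mul hinv (le_trans h1 h2) (norm_nonneg _)
          exact zero_le_one
      _ = C := one_mul _
  have hCnn : (0:ℝ) ≤ C := Finset.sum_nonneg (fun k _ => hck k)
  have hzv : ‖zbar - vbar‖ ^ 2 ≤ 4 * C ^ 2 := by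
    have : ‖zbar - vbar‖ ≤ 2 * C := by
      calc ‖zbar - vbar‖ ≤ ‖zbar‖ + ‖vbar‖ := norm_sub_le _ _
        _ ≤ 2 * C := by linarith
    nlinarith [norm_nonneg (zbar - vbar)]
  -- bias-variance decomposition
  set c : E := zbar - vbar with hc
  have hWz : MemLp (fun ω => W ω - zbar) 2 P := hW.sub (memLp_const zbar)
  have hint1 : Integrable (fun ω => ‖W ω - zbar‖ ^ 2) P := hWz.norm.integrable_sq
  have hWzint : Integrable (fun ω => W ω - zbar) P := hWz.integrable one_le_two
  have hint2 : Integrable (fun ω => ⟪W ω - zbar, c⟫) P := by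
    have := (innerSL ℝ c).integrable_comp hWzint
    simpa [real_inner_comm] using this
  have hmean0 : ∫ ω, (W ω - zbar) ∂P = 0 := by
    rw [integral_sub (hW.integrable one_le_two) (integrable_const zbar), hmean,
      integral_const]
    simp
  have hcross : ∫ ω, ⟪W ω - zbar, c⟫ ∂P = 0 := by
    calc ∫ ω, ⟪W ω - zbar, c⟫ ∂P = ∫ ω, (innerSL ℝ c) (W ω - zbar) ∂P := by
          simp [real_inner_comm]
      _ = (innerSL ℝ c) (∫ ω, (W ω - zbar) ∂P) :=
          (innerSL ℝ c).integral_comp_comm hWzint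
      _ = 0 := by rw [hmean0]; simp
  have hdecomp : (∫ ω, ‖W ω - vbar‖ ^ 2 ∂P)
      = (∫ ω, ‖W ω - zbar‖ ^ 2 ∂P) + ‖c‖ ^ 2 := by
    have heq : (fun ω => ‖W ω - vbar‖ ^ 2)
        = fun ω => ‖W ω - zbar‖ ^ 2 + (2 * ⟪W ω - zbar, c⟫ + ‖c‖ ^ 2) := by
      funext ω
      have hw : W ω - vbar = (W ω - zbar) + c := by rw [hc]; abel
      rw [hw, norm_add_sq_real]; ring
    have hintg : Integrable (fun ω => 2 * ⟪W ω - zbar, c⟫ + ‖c‖ ^ 2) P :=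
      (hint2.const_mul 2).add (integrable_const _)
    rw [heq, integral_add hint1 hintg]
    have : ∫ ω, (2 * ⟪W ω - zbar, c⟫ + ‖c‖ ^ 2) ∂P = ‖c‖ ^ 2 := by
      rw [integral_add (hint2.const_mul 2) (integrable_const _),
        integral_const_mul, hcross, integral_const]
      simp
    rw [this]
  rw [hdecomp]
  have : ‖c‖ ^ 2 ≤ 4 * C ^ 2 := hzv
  linarith
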